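/- For all n ≥ 0, shifting the Zeckendorf representation of n left by two positions and then adding 1 (in the sense of Zeckendorf digit strings: appending the digits 01) yields ⌊(n+1)φ²⌋ − 1; equivalently, if n = Σᵢ aᵢFᵢ is the Zeckendorf representation, then 1 + Σᵢ aᵢF_{i+2} = ⌊(n+1)φ²⌋ − 1, where φ = (1+√5)/2. -/

import Mathlib

noncomputable def phi : ℝ := (1 + Real.sqrt 5) / 2

set_option maxHeartbeats 1000000 in
lemma fib_shift (i : ℕ) :
    (Nat.fib (i + 2) : ℝ) = phi ^ 2 * Nat.fib i + Real.goldenConj ^ i := by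
  have h5 : Real.sqrt 5 ^ 2 = 5 := Real.sq_sqrt (by norm_num)
  have h5pos : (0:ℝ) < Real.sqrt 5 := Real.sqrt_pos.mpr (by norm_num)
  have hphi : phi = Real.goldenRatio := rfl
  have h2 : Real.goldenConj ^ 2 = phi ^ 2 - Real.sqrt 5 := by
    rw [hphi]; show ((1-Real.sqrt 5)/2)^2 = ((1+Real.sqrt 5)/2)^2 - Real.sqrt 5
    nlinarith [h5]
  rw [Real.coe_fib_eq, Real.coe_fib_eq, pow_add, pow_add, h2, hphi]
  field_simp
  ring

set_option maxHeartbeats 1000000 in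
lemma E_bounds (T : ℕ) (a : ℕ → ℕ) (hbit : ∀ i, a i ≤ 1)
    (h0 : a 0 = 0) (h1 : a 1 = 0) :
    -1 - Real.goldenConj < ∑ i ∈ Finset.range T, (a i : ℝ) * Real.goldenConj ^ i ∧
    ∑ i ∈ Finset.range T, (a i : ℝ) * Real.goldenConj ^ i < -Real.goldenConj := by
  have h5 : Real.sqrt 5 ^ 2 = 5 := Real.sq_sqrt (by norm_num)
  have h5gt : 1 < Real.sqrt 5 := by nlinarith [Real.sqrt_nonneg 5]
  have h5lt : Real.sqrt 5 < 3 := by nlinarith [Real.sqrt_nonneg 5]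
  set c : ℝ := -Real.goldenConj with hc
  have hpsi : Real.goldenConj = -c := by simp [hc]
  have hc0 : 0 < c := by simp only [hc]; show (0:ℝ) < -((1 - Real.sqrt 5)/2); linarith
  have hc1 : c < 1 := by simp only [hc]; show -((1 - Real.sqrt 5)/2) < 1; linarith
  have hcsq : c ^ 2 = 1 - c := by
    simp only [hc]; show (-((1 - Real.sqrt 5)/2))^2 = 1 - -((1 - Real.sqrt 5)/2)
    nlinarith [h5]
  -- small T cases
  match T with
  | 0 => simp; constructor <;> linarith
  | 1 => simp [h0]; constructor <;> linarith
  | (t + 2) =>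
  set T := t + 2 with hT
  set P : ℝ := ∑ i ∈ Finset.range T, Real.goldenConj ^ i with hPdef
  set Q : ℝ := ∑ i ∈ Finset.range T, c ^ i with hQdef
  set x : ℝ := Real.goldenConj ^ T with hxdef
  set y : ℝ := c ^ T with hydef
  have hy : 0 < y := pow_pos hc0 T
  have hx1 : x ≤ y := by
    rw [hxdef, hydef, hpsi]
    calc (-c) ^ T ≤ |(-c) ^ T| := le_abs_self _
    _ = c ^ T := by rw [abs_pow, abs_neg, abs_of_pos hc0]
  have hx2 : -y ≤ x := by
    rw [hxdef, hydef, hpsi]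
    calc -(c ^ T) = -|(-c) ^ T| := by rw [abs_pow, abs_neg, abs_of_pos hc0]
    _ ≤ (-c) ^ T := neg_abs_le _
  have hP : (1 + c) * P = 1 - x := by
    have := geom_sum_mul Real.goldenConj T
    rw [← hPdef, ← hxdef, hpsi] at this
    linear_combination -this
  have hQ : (1 - c) * Q = 1 - y := by
    have := geom_sum_mul c T
    rw [← hQdef, ← hydef] at this
    linear_combination -this
  have h1T : (1 : ℕ) ∈ Finset.range T := by simp [hT]
  have h0T : (0 : ℕ) ∈ Finset.range T := by simp [hT]
  constructor
  · -- lower bound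
    have hterm : ∀ i ∈ Finset.range T,
        (Real.goldenConj ^ i - c ^ i) / 2 + (if i = 1 then c else 0) ≤ (a i : ℝ) * Real.goldenConj ^ i := by
      intro i _
      rcases Nat.even_or_odd i with he | ho
      · have hne : i ≠ 1 := by rintro rfl; exact (Nat.not_even_iff.mpr rfl) he
        have hpe : Real.goldenConj ^ i = c ^ i := by rw [hpsi, he.neg_pow]
        simp only [hne, if_false, hpe]
        have : (0:ℝ) ≤ (a i : ℝ) * c ^ i := by positivity
        linarith
      · have hpo : Real.goldenConj ^ i = -(c ^ i) := by rw [hpsi, ho.neg_pow]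
        by_cases hi1 : i = 1
        · subst hi1; simp [h1, hpo]; linarith
        · simp only [hi1, if_false, hpo]
          have ha1 : (a i : ℝ) ≤ 1 := by exact_mod_cast hbit i
          have hcp : (0:ℝ) < c ^ i := pow_pos hc0 i
          have h0a : (0:ℝ) ≤ (a i : ℝ) := Nat.cast_nonneg _
          nlinarith
    have hsumle := Finset.sum_le_sum hterm
    rw [Finset.sum_add_distrib, Finset.sum_ite_eq' (Finset.range T) 1 (fun _ => c)] at hsumle
    simp only [h1T, if_true] at hsumle
    have hsplit : ∑ i ∈ Finset.range T, (Real.goldenConj ^ i - c ^ i) / 2 = (P - Q) / 2 := by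
      rw [hPdef, hQdef, ← Finset.sum_sub_distrib, ← Finset.sum_div]
    rw [hsplit] at hsumle
    have key : (1 - c ^ 2) * (P - Q + 2) = (y - x) + c * (x + y) := by
      linear_combination (1 - c) * hP - (1 + c) * hQ - 2 * hcsq
    have h1c : (0:ℝ) ≤ 1 - c := by linarith
    have hpos : 0 < (y - x) + c * (x + y) := by
      have := mul_le_mul_of_nonneg_left hx1 h1c
      have := mul_pos hc0 hy
      nlinarith
    have hc2 : 1 - c ^ 2 = c := by linarith
    rw [hc2] at key
    have : 0 < P - Q + 2 := pos_of_mul_pos_right (key ▸ hpos) hc0.le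
    have hlin : -1 - Real.goldenConj = -1 + c := by rw [hpsi]; ring
    linarith
  · -- upper bound
    have hterm : ∀ i ∈ Finset.range T,
        (a i : ℝ) * Real.goldenConj ^ i ≤ (Real.goldenConj ^ i + c ^ i) / 2 - (if i = 0 then 1 else 0) := by
      intro i _
      rcases Nat.even_or_odd i with he | ho
      · have hpe : Real.goldenConj ^ i = c ^ i := by rw [hpsi, he.neg_pow]
        by_cases hi0 : i = 0
        · subst hi0; simp [h0]
        · simp only [hi0, if_false, hpe]
          have ha1 : (a i : ℝ) ≤ 1 := by exact_mod_cast hbit i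
          have hcp : (0:ℝ) < c ^ i := pow_pos hc0 i
          nlinarith
      · have hne : i ≠ 0 := by rintro rfl; exact (Nat.not_odd_iff.mpr rfl) ho
        have hpo : Real.goldenConj ^ i = -(c ^ i) := by rw [hpsi, ho.neg_pow]
        simp only [hne, if_false, hpo]
        have h0a : (0:ℝ) ≤ (a i : ℝ) := Nat.cast_nonneg _
        have hcp : (0:ℝ) < c ^ i := pow_pos hc0 i
        nlinarith
    have hsumle := Finset.sum_le_sum hterm
    rw [Finset.sum_sub_distrib, Finset.sum_ite_eq' (Finset.range T) 0 (fun _ => (1:ℝ))] at hsumle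
    simp only [h0T, if_true] at hsumle
    have hsplit : ∑ i ∈ Finset.range T, (Real.goldenConj ^ i + c ^ i) / 2 = (P + Q) / 2 := by
      rw [hPdef, hQdef, ← Finset.sum_add_distrib, ← Finset.sum_div]
    rw [hsplit] at hsumle
    have key : (1 - c ^ 2) * (2 + 2 * c - P - Q) = (x + y) + c * (y - x) := by
      linear_combination -(1 - c) * hP - (1 + c) * hQ - 2 * c * hcsq
    have h1c : (0:ℝ) ≤ 1 - c := by linarith
    have hpos : 0 < (x + y) + c * (y - x) := by
      have := mul_le_mul_of_nonneg_left hx2 h1c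
      have := mul_pos hc0 hy
      nlinarith
    have hc2 : 1 - c ^ 2 = c := by linarith
    rw [hc2] at key
    have : 0 < 2 + 2 * c - P - Q := pos_of_mul_pos_right (key ▸ hpos) hc0.le
    have hlin : -Real.goldenConj = c := by rw [hpsi]; ring
    linarith

theorem zeckendorf_shift_two_plus_one (n T : ℕ) (a : ℕ → ℕ)
    (hbit : ∀ i, a i ≤ 1)
    (hnoconsec : ∀ i, a i * a (i + 1) = 0)
    (h0 : a 0 = 0) (h1 : a 1 = 0)
    (hrep : n = ∑ i ∈ Finset.range T, a i * Nat.fib i) :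
    1 + ∑ i ∈ Finset.range T, a i * Nat.fib (i + 2) =
      ⌊((n : ℝ) + 1) * phi ^ 2⌋₊ - 1 := by
  set S : ℕ := ∑ i ∈ Finset.range T, a i * Nat.fib (i + 2) with hS
  set E : ℝ := ∑ i ∈ Finset.range T, (a i : ℝ) * Real.goldenConj ^ i with hE
  obtain ⟨hE1, hE2⟩ := E_bounds T a hbit h0 h1
  have h5 : Real.sqrt 5 ^ 2 = 5 := Real.sq_sqrt (by norm_num)
  have h5nn : (0:ℝ) ≤ Real.sqrt 5 := Real.sqrt_nonneg 5
  have hSr : (S : ℝ) = phi ^ 2 * (n : ℝ) + E := by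
    rw [hS, hrep, hE]
    push_cast
    rw [Finset.mul_sum, ← Finset.sum_add_distrib]
    apply Finset.sum_congr rfl
    intro i _
    rw [fib_shift i]; ring
  have hphisq : phi ^ 2 = 2 + -Real.goldenConj := by
    show ((1 + Real.sqrt 5)/2)^2 = 2 + -((1 - Real.sqrt 5)/2)
    nlinarith [h5]
  have hnn : (0:ℝ) ≤ ((n : ℝ) + 1) * phi ^ 2 := by
    have : (0:ℝ) ≤ phi ^ 2 := by positivity
    have : (0:ℝ) ≤ (n:ℝ) + 1 := by positivity
    positivity
  have key : ⌊((n : ℝ) + 1) * phi ^ 2⌋₊ = S + 2 := by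
    rw [Nat.floor_eq_iff hnn]
    constructor
    · push_cast
      nlinarith [hSr, hphisq, hE2, (Nat.cast_nonneg n : (0:ℝ) ≤ (n:ℝ))]
    · push_cast
      nlinarith [hSr, hphisq, hE1, (Nat.cast_nonneg n : (0:ℝ) ≤ (n:ℝ))]
  rw [key]
  omega
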